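/- arXiv:2303.07979 — 2 statements merged into one kernel-verified Lean document; each statement's English description precedes it below -/
import Mathlib

section
/- For X ⊆ {1,...,n}, the R-span J_X of all diagrams in which, among the right-hand nodes labelled by elements of X, there is at least one singleton block or one pair of nodes in the same block, is a left ideal of P_n(R,δ). -/
/-! Core definitions for the partition algebra `P_n(R, δ)`. -/

attribute [local instance] Classical.propDecidable

/-- Nodes of a partition diagram: `Sum.inl i` is the left node `-(i+1)`,
`Sum.inr i` is the right node `i+1`. -/
abbrev PNode (n : ℕ) := Sum (Fin n) (Fin n)

/-- A diagram is a set partition (equivalence relation) of the `2n` nodes. -/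
abbrev PDiagram (n : ℕ) := Setoid (PNode n)

/-- Three copies of the nodes: left, middle, right; used to concatenate diagrams. -/
abbrev TNode (n : ℕ) := Sum (Fin n) (Sum (Fin n) (Fin n))

def inLM (n : ℕ) : PNode n → TNode n :=
  Sum.elim Sum.inl (fun i => Sum.inr (Sum.inl i))

def inMR (n : ℕ) : PNode n → TNode n :=
  Sum.elim (fun i => Sum.inr (Sum.inl i)) (fun i => Sum.inr (Sum.inr i))

def inOuter (n : ℕ) : PNode n → TNode n :=
  Sum.elim Sum.inl (fun i => Sum.inr (Sum.inr i))

/-- The partition of the three-fold node set generated by placing diagram `a`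
on the (left, middle) nodes and diagram `b` on the (middle, right) nodes. -/
def joinSetoid (n : ℕ) (a b : PDiagram n) : Setoid (TNode n) :=
  Relation.EqvGen.setoid (fun x y =>
    (∃ u v, a.r u v ∧ x = inLM n u ∧ y = inLM n v) ∨
    (∃ u v, b.r u v ∧ x = inMR n u ∧ y = inMR n v))

def isMiddle (n : ℕ) : TNode n → Prop := fun x => ∃ i : Fin n, x = Sum.inr (Sum.inl i)

/-- The concatenation of two diagrams: the induced partition on the outer nodes. -/
def compDiagram (n : ℕ) (a b : PDiagram n) : PDiagram n :=
  Setoid.comap (inOuter n) (joinSetoid n a b)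

/-- The number of blocks of the concatenation contained entirely in the middle nodes. -/
noncomputable def middleCount (n : ℕ) (a b : PDiagram n) : ℕ :=
  Nat.card {c : Quotient (joinSetoid n a b) //
    ∀ x : TNode n, Quotient.mk (joinSetoid n a b) x = c → isMiddle n x}

/-- The partition algebra: the free `R`-module on the set of diagrams. -/
def PAlg (n : ℕ) (R : Type) [CommRing R] (_δ : R) : Type := PDiagram n →₀ R

variable (n : ℕ) (R : Type) [CommRing R] (δ : R)

noncomputable instance : AddCommGroup (PAlg n R δ) := inferInstanceAs (AddCommGroup (PDiagram n →₀ R))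
noncomputable instance : Module R (PAlg n R δ) := inferInstanceAs (Module R (PDiagram n →₀ R))

/-- The basis element of the partition algebra given by a diagram. -/
noncomputable def PAdiag (d : PDiagram n) : PAlg n R δ := Finsupp.single d 1

/-- Multiplication of the partition algebra: concatenate diagrams and multiply by
`δ^k` where `k` is the number of blocks contained in the middle nodes. -/
noncomputable def PAmul (x y : PAlg n R δ) : PAlg n R δ :=
  Finsupp.sum (x : PDiagram n →₀ R) fun a r =>
    Finsupp.sum (y : PDiagram n →₀ R) fun b s =>
      (Finsupp.single (compDiagram n a b) (r * s * δ ^ middleCount n a b) : PDiagram n →₀ R)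

/-- The identity diagram, with blocks `{-i, i}` for `1 ≤ i ≤ n`. -/
def idDiagram (n : ℕ) : PDiagram n := Setoid.ker (Sum.elim id id)

/-- The unit of the partition algebra. -/
noncomputable def PAone : PAlg n R δ := Finsupp.single (idDiagram n) 1

/-- The permutation diagram of `σ`, with blocks `{-i, σ(i)}`. -/
def permDiagram (σ : Equiv.Perm (Fin n)) : PDiagram n := Setoid.ker (Sum.elim (⇑σ) id)

/-- The right node `i` is a singleton block of `d`. -/
def singletonAt (d : PDiagram n) (i : Fin n) : Prop :=
  ∀ v : PNode n, d.r (Sum.inr i) v → v = Sum.inr i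

/-- `J_X`: the `R`-span of all diagrams in which, among the right-hand nodes labelled
by elements of `X`, there is at least one singleton block or one pair of nodes in the
same block. -/
noncomputable def JXSpan (X : Finset (Fin n)) : Submodule R (PAlg n R δ) :=
  Submodule.span R {f | ∃ d : PDiagram n,
    ((∃ i ∈ X, singletonAt n d i) ∨
      (∃ i ∈ X, ∃ j ∈ X, i ≠ j ∧ d.r (Sum.inr i) (Sum.inr j))) ∧
    f = PAdiag n R δ d}

section Aux

variable {m : ℕ}

lemma join_fix (a b : PDiagram m) (i : Fin m) (h : singletonAt m b i) :
    ∀ x y : TNode m, (joinSetoid m a b).r x y →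
      (x = Sum.inr (Sum.inr i) ↔ y = Sum.inr (Sum.inr i)) := by
  intro x y hxy
  induction hxy with
  | rel x y hr =>
    rcases hr with ⟨u, w, huw, hx, hy⟩ | ⟨u, w, huw, hx, hy⟩
    · subst hx; subst hy
      constructor <;> intro hh <;> (cases u <;> cases w <;> simp [inLM] at hh)
    · subst hx; subst hy
      constructor
      · intro hh
        have hu : u = Sum.inr i := by
          cases u with
          | inl j => simp [inMR] at hh
          | inr j => simp only [inMR, Sum.elim_inr, Sum.inr.injEq] at hh; rw [hh]
        subst hu
        have hw := h w huw
        rw [hw]; rfl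
      · intro hh
        have hw : w = Sum.inr i := by
          cases w with
          | inl j => simp [inMR] at hh
          | inr j => simp only [inMR, Sum.elim_inr, Sum.inr.injEq] at hh; rw [hh]
        subst hw
        have hu := h u (b.iseqv.symm huw)
        rw [hu]; rfl
  | refl x => exact Iff.rfl
  | symm _ _ _ ih => exact ih.symm
  | trans _ _ _ _ _ ih1 ih2 => exact ih1.trans ih2

lemma comp_singleton (a b : PDiagram m) (i : Fin m) (h : singletonAt m b i) :
    singletonAt m (compDiagram m a b) i := by
  intro v hv
  have hv2 : (joinSetoid m a b).r (inOuter m (Sum.inr i)) (inOuter m v) := hv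
  have := (join_fix a b i h _ _ hv2).1 rfl
  cases v with
  | inl j => simp [inOuter] at this
  | inr j => simp only [inOuter, Sum.elim_inr, Sum.inr.injEq] at this; rw [this]

lemma comp_pair (a b : PDiagram m) (i j : Fin m) (h : b.r (Sum.inr i) (Sum.inr j)) :
    (compDiagram m a b).r (Sum.inr i) (Sum.inr j) := by
  show (joinSetoid m a b).r (inOuter m (Sum.inr i)) (inOuter m (Sum.inr j))
  exact Relation.EqvGen.rel _ _ (Or.inr ⟨Sum.inr i, Sum.inr j, h, rfl, rfl⟩)

end Aux

lemma smul_PAdiag (r : R) (d : PDiagram n) :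
    r • PAdiag n R δ d = (Finsupp.single d r : PAlg n R δ) := by
  show r • (Finsupp.single d 1 : PDiagram n →₀ R) = Finsupp.single d r
  rw [Finsupp.smul_single, smul_eq_mul, mul_one]

/-- `J_X` is a left ideal of the partition algebra. -/
theorem JXSpan_left_ideal (X : Finset (Fin n)) :
    ∀ a f : PAlg n R δ, f ∈ JXSpan n R δ X → PAmul n R δ a f ∈ JXSpan n R δ X := by
  intro a f hf
  obtain ⟨a, rfl⟩ : ∃ a' : PDiagram n →₀ R, a' = a := ⟨a, rfl⟩
  induction hf using Submodule.span_induction with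
  | mem x hx =>
    obtain ⟨d, hd, rfl⟩ := hx
    delta PAmul; rw [PAdiag]
    refine Submodule.sum_mem _ ?_
    intro c _
    beta_reduce
    erw [Finsupp.sum_single_index (by simp; rfl)]
    have hmem : PAdiag n R δ (compDiagram n c d) ∈ JXSpan n R δ X := by
      refine Submodule.subset_span ⟨compDiagram n c d, ?_, rfl⟩
      rcases hd with ⟨i, hi, hsing⟩ | ⟨i, hi, j, hj, hij, hrel⟩
      · exact Or.inl ⟨i, hi, comp_singleton c d i hsing⟩
      · exact Or.inr ⟨i, hi, j, hj, hij, comp_pair c d i j hrel⟩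
    rw [mul_one, ← smul_PAdiag]
    exact Submodule.smul_mem _ _ hmem
  | zero =>
    have : PAmul n R δ a 0 = 0 := by
      delta PAmul
      exact Finset.sum_eq_zero fun c _ => Finsupp.sum_zero_index
    rw [this]; exact zero_mem _
  | add x y hx hy ihx ihy =>
    have : PAmul n R δ a (x + y) = PAmul n R δ a x + PAmul n R δ a y := by
      delta PAmul; rw [← Finsupp.sum_add]
      refine Finsupp.sum_congr fun c _ => ?_
      erw [Finsupp.sum_add_index]
      · intro d _; simp; rfl
      · intro d _ s t; erw [← Finsupp.single_add]; ring_nf; rfl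
    rw [this]; exact add_mem ihx ihy
  | smul r x hx ihx =>
    have : PAmul n R δ a (r • x) = r • PAmul n R δ a x := by
      delta PAmul; rw [Finsupp.smul_sum]
      refine Finsupp.sum_congr fun c _ => ?_
      beta_reduce
      erw [Finsupp.smul_sum]
      erw [Finsupp.sum_smul_index (fun d => by simp; rfl)]
      refine Finsupp.sum_congr fun d _ => ?_
      beta_reduce
      erw [Finsupp.smul_single, smul_eq_mul]
      ring_nf
      rfl
    rw [this]; exact Submodule.smul_mem _ _ ihx
end

section
/- Let X be a finite set and s ≥ 0. The complex of injective words with s separators W_X^{(s)} — concentrated in degrees −1 ≤ p ≤ |X|−1, with degree-p basis the words of length s+p+1 in the alphabet X ⊔ {|} containing each letter of X at most once and exactly s separators |, and boundary the signed sum over deletions of non-separator letters (signs by position among all letters) — satisfies ∂^{p-1} ∘ ∂^p = 0, and its homology vanishes in degrees i ≤ |X| − 2. -/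
set_option linter.unusedSectionVars false
set_option maxHeartbeats 1000000

/-! The complex of injective words with separators. -/

variable (X : Type) [Fintype X] [DecidableEq X] (R : Type) [CommRing R] (s : ℕ)

/-- An injective word on `X` with `s` separators and `k` letters from `X`:
a word in the alphabet `X ⊔ {|}` (`none` is the separator `|`) in which each letter
from `X` appears at most once and the separator exactly `s` times; its length is
`s + k` and its homological degree is `k - 1`. -/
def IsSepWord (k : ℕ) (w : List (Option X)) : Prop :=
  (w.filterMap id).Nodup ∧ w.count none = s ∧ w.length = s + k

instance (k : ℕ) : DecidablePred (IsSepWord X s k) := fun w => by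
  unfold IsSepWord; infer_instance

/-- The degree `k - 1` chain group of the complex of injective words with `s`
separators: the free `R`-module on the injective words with `s` separators and `k`
letters from `X`. -/
abbrev SepWords (k : ℕ) : Type := {w : List (Option X) // IsSepWord X s k w} →₀ R

/-- The boundary operator: the signed sum over deletions of the non-separator
letters, with the sign determined by the position of the deleted letter among all
letters (separators are never deleted). -/
noncomputable def sepBnd (k : ℕ) : SepWords X R s (k + 1) →ₗ[R] SepWords X R s k :=
  Finsupp.lift (SepWords X R s k) R {w : List (Option X) // IsSepWord X s (k + 1) w}
    (fun w => ∑ i ∈ Finset.range w.1.length,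
      if h : IsSepWord X s k (w.1.eraseIdx i)
      then Finsupp.single ⟨w.1.eraseIdx i, h⟩ ((-1 : R) ^ i)
      else 0)

/- ### auxiliary list lemmas -/

theorem eraseIdx_eraseIdx {α : Type*} (l : List α) (i j : ℕ) (h : i ≤ j) :
    (l.eraseIdx (j+1)).eraseIdx i = (l.eraseIdx i).eraseIdx j := by
  induction l generalizing i j with
  | nil => simp
  | cons a l ih =>
    cases i with
    | zero => simp
    | succ i =>
      cases j with
      | zero => omega
      | succ j => simp only [List.eraseIdx_cons_succ, ih i j (by omega)]

theorem count_none_eraseIdx (w : List (Option X)) (i : ℕ) (hi : i < w.length) :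
    w.count none = (w.eraseIdx i).count none + (if w[i] = none then 1 else 0) := by
  have h0 : w = w.take i ++ w[i] :: w.drop (i+1) := by
    rw [List.getElem_cons_drop hi, List.take_append_drop]
  rw [List.eraseIdx_eq_take_drop_succ, List.count_append]
  conv_lhs => rw [h0]
  rw [List.count_append, List.count_cons]
  clear h0
  simp only [beq_iff_eq]
  split <;> omega

theorem filterMap_eraseIdx_sublist (w : List (Option X)) (i : ℕ) :
    ((w.eraseIdx i).filterMap id).Sublist (w.filterMap id) :=
  (List.eraseIdx_sublist w i).filterMap id

theorem isSepWord_eraseIdx_iff {k : ℕ} {w : List (Option X)} (hw : IsSepWord X s (k+1) w)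
    {i : ℕ} (hi : i < w.length) :
    IsSepWord X s k (w.eraseIdx i) ↔ w[i] ≠ none := by
  obtain ⟨h1, h2, h3⟩ := hw
  have hc := count_none_eraseIdx X w i hi
  have hl : (w.eraseIdx i).length + 1 = w.length := List.length_eraseIdx_add_one hi
  constructor
  · rintro ⟨-, c2, c3⟩ hnone
    rw [if_pos hnone] at hc; omega
  · intro hx
    refine ⟨((filterMap_eraseIdx_sublist X w i).nodup h1), ?_, ?_⟩ <;>
      rw [if_neg hx] at hc <;> omega

/- ### sepBnd on single basis elements -/

theorem sepBnd_single (k : ℕ) (w : {w : List (Option X) // IsSepWord X s (k+1) w}) (r : R) :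
    sepBnd X R s k (Finsupp.single w r) =
      ∑ i ∈ Finset.range w.1.length,
        if h : IsSepWord X s k (w.1.eraseIdx i)
        then Finsupp.single ⟨w.1.eraseIdx i, h⟩ ((-1 : R) ^ i * r)
        else 0 := by
  unfold sepBnd
  rw [Finsupp.lift_apply, Finsupp.sum_single_index (by simp), Finset.smul_sum]
  refine Finset.sum_congr rfl fun i _ => ?_
  split
  · rw [Finsupp.smul_single, smul_eq_mul, mul_comm]
  · simp

/- ### the boundary squares to zero -/

/-- The term of the double sum `∂∂(single w r)`. -/
noncomputable def Fterm (k : ℕ) (w : List (Option X)) (r : R) (p : ℕ × ℕ) :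
    SepWords X R s k :=
  if h : IsSepWord X s (k+1) (w.eraseIdx p.1) ∧
         IsSepWord X s k ((w.eraseIdx p.1).eraseIdx p.2)
  then Finsupp.single ⟨(w.eraseIdx p.1).eraseIdx p.2, h.2⟩
         ((-1 : R) ^ p.2 * ((-1 : R) ^ p.1 * r))
  else 0

theorem Fcancel (k : ℕ) (w : List (Option X)) (hw : IsSepWord X s (k+1+1) w) (r : R)
    (j i : ℕ) (hj : j < s + k + 2) (hi : i < s + k + 1) (hij : i < j) :
    Fterm X R s k w r (j, i) + Fterm X R s k w r (i, j - 1) = 0 := by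
  have hlen : w.length = s + k + 2 := by rw [hw.2.2]; ring
  have hjl : j < w.length := by omega
  have hil : i < w.length := by omega
  have e1 : IsSepWord X s (k+1) (w.eraseIdx j) ↔ w[j] ≠ none :=
    isSepWord_eraseIdx_iff X s hw hjl
  have e1' : IsSepWord X s (k+1) (w.eraseIdx i) ↔ w[i] ≠ none :=
    isSepWord_eraseIdx_iff X s hw hil
  by_cases a : w[j] = none
  · rw [Fterm, dif_neg (fun hc => (e1.mp hc.1) a), Fterm, dif_neg, zero_add]
    rintro ⟨c1, c2⟩
    have hjl2 : j - 1 < (w.eraseIdx i).length := by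
      rw [List.length_eraseIdx_of_lt hil]; omega
    have := (isSepWord_eraseIdx_iff X s c1 hjl2).mp c2
    apply this
    rw [List.getElem_eraseIdx_of_ge _ (by omega)]
    have hj1 : j - 1 + 1 = j := by omega
    simp only [hj1]
    exact a
  · by_cases b : w[i] = none
    · rw [Fterm, dif_neg, Fterm, dif_neg (fun hc => (e1'.mp hc.1) b), add_zero]
      rintro ⟨c1, c2⟩
      have hil2 : i < (w.eraseIdx j).length := by
        rw [List.length_eraseIdx_of_lt hjl]; omega
      have := (isSepWord_eraseIdx_iff X s c1 hil2).mp c2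
      apply this
      rw [List.getElem_eraseIdx_of_lt _ hij]
      exact b
    · -- both terms present; they cancel
      have h1 : IsSepWord X s (k+1) (w.eraseIdx j) := e1.mpr a
      have h1' : IsSepWord X s (k+1) (w.eraseIdx i) := e1'.mpr b
      have h2 : IsSepWord X s k ((w.eraseIdx j).eraseIdx i) := by
        rw [isSepWord_eraseIdx_iff X s h1 (by rw [List.length_eraseIdx_of_lt hjl]; omega)]
        rw [List.getElem_eraseIdx_of_lt _ hij]
        exact b
      have h2' : IsSepWord X s k ((w.eraseIdx i).eraseIdx (j-1)) := by
        rw [isSepWord_eraseIdx_iff X s h1' (by rw [List.length_eraseIdx_of_lt hil]; omega)]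
        rw [List.getElem_eraseIdx_of_ge _ (by omega)]
        have hj1 : j - 1 + 1 = j := by omega
        simp only [hj1]
        exact a
      have key : (w.eraseIdx j).eraseIdx i = (w.eraseIdx i).eraseIdx (j-1) := by
        have := eraseIdx_eraseIdx w i (j-1) (by omega)
        have hj1 : j - 1 + 1 = j := by omega
        rwa [hj1] at this
      rw [Fterm, dif_pos ⟨h1, h2⟩, Fterm, dif_pos ⟨h1', h2'⟩]
      have eq1 : (⟨(w.eraseIdx j).eraseIdx i, h2⟩ :
          {u : List (Option X) // IsSepWord X s k u}) = ⟨(w.eraseIdx i).eraseIdx (j-1), h2'⟩ :=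
        Subtype.ext key
      have hc0 : (-1 : R) ^ i * ((-1 : R) ^ j * r) + (-1 : R) ^ (j-1) * ((-1 : R) ^ i * r)
          = 0 := by
        have hpow : (-1 : R) ^ j = -(-1 : R) ^ (j - 1) := by
          have h1 : j - 1 + 1 = j := by omega
          conv_lhs => rw [← h1, pow_succ]
          ring
        rw [hpow]
        ring
      rw [eq1, ← Finsupp.single_add, hc0, Finsupp.single_zero]

theorem bnd_bnd (k : ℕ) : (sepBnd X R s k).comp (sepBnd X R s (k + 1)) = 0 := by
  apply Finsupp.lhom_ext
  intro w r
  rw [LinearMap.comp_apply, sepBnd_single, map_sum, LinearMap.zero_apply]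
  have hlen : w.1.length = s + k + 2 := by rw [w.2.2.2]; ring
  have step1 : ∀ j ∈ Finset.range w.1.length,
      sepBnd X R s k (if h : IsSepWord X s (k+1) (w.1.eraseIdx j)
        then Finsupp.single ⟨w.1.eraseIdx j, h⟩ ((-1 : R) ^ j * r) else 0)
      = ∑ i ∈ Finset.range (s + k + 1), Fterm X R s k w.1 r (j, i) := by
    intro j hj
    by_cases h : IsSepWord X s (k+1) (w.1.eraseIdx j)
    · rw [dif_pos h, sepBnd_single]
      have hl2 : (w.1.eraseIdx j).length = s + k + 1 := by rw [h.2.2]; ring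
      rw [hl2]
      refine Finset.sum_congr rfl fun i _ => ?_
      by_cases h2 : IsSepWord X s k ((w.1.eraseIdx j).eraseIdx i)
      · rw [Fterm, dif_pos h2, dif_pos ⟨h, h2⟩]
      · rw [Fterm, dif_neg h2, dif_neg (fun hc => h2 hc.2)]
    · rw [dif_neg h, map_zero]
      refine (Finset.sum_eq_zero fun i _ => ?_).symm
      rw [Fterm, dif_neg (fun hc => h hc.1)]
  rw [Finset.sum_congr rfl step1, ← Finset.sum_product']
  refine Finset.sum_involution
    (fun p _ => if p.2 < p.1 then (p.2, p.1 - 1) else (p.2 + 1, p.1)) ?_ ?_ ?_ ?_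
  · rintro ⟨j, i⟩ hp
    simp only [Finset.mem_product, Finset.mem_range, hlen] at hp
    obtain ⟨hj, hi⟩ := hp
    dsimp only
    by_cases hij : i < j
    · rw [if_pos hij]
      exact Fcancel X R s k w.1 w.2 r j i hj hi hij
    · rw [if_neg hij]
      rw [add_comm]
      have := Fcancel X R s k w.1 w.2 r (i+1) j (by omega) (by omega) (by omega)
      simpa using this
  · rintro ⟨j, i⟩ _ _
    by_cases hij : i < j <;> simp [hij, Prod.ext_iff] <;> omega
  · rintro ⟨j, i⟩ hp
    simp only [Finset.mem_product, Finset.mem_range, hlen] at hp ⊢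
    by_cases hij : i < j <;> simp [hij] <;> omega
  · rintro ⟨j, i⟩ hp
    dsimp only
    by_cases hij : i < j
    · rw [if_pos hij, if_neg (by omega)]
      rw [Prod.mk.injEq]
      omega
    · rw [if_neg hij, if_pos (by omega)]
      rw [Prod.mk.injEq]
      omega

/- ### the insertion operator -/

theorem filterMap_cons_some' (x : X) (u : List (Option X)) :
    (some x :: u).filterMap id = x :: u.filterMap id := by
  simp

theorem isSepWord_cons_iff {k : ℕ} (x : X) (u : List (Option X)) :
    IsSepWord X s (k+1) (some x :: u) ↔ IsSepWord X s k u ∧ x ∉ u.filterMap id := by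
  unfold IsSepWord
  rw [filterMap_cons_some', List.nodup_cons, List.count_cons]
  simp only [List.length_cons, beq_iff_eq, reduceCtorEq, if_false, add_zero]
  constructor
  · rintro ⟨⟨hx, h1⟩, h2, h3⟩
    exact ⟨⟨h1, h2, by omega⟩, hx⟩
  · rintro ⟨⟨h1, h2, h3⟩, hx⟩
    exact ⟨⟨hx, h1⟩, h2, by omega⟩

noncomputable def sepIns (x : X) (k : ℕ) : SepWords X R s k →ₗ[R] SepWords X R s (k+1) :=
  Finsupp.lift (SepWords X R s (k+1)) R {w : List (Option X) // IsSepWord X s k w}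
    (fun w => if h : IsSepWord X s (k+1) (some x :: w.1)
      then Finsupp.single ⟨some x :: w.1, h⟩ 1 else 0)

theorem sepIns_single (x : X) (k : ℕ) (w : {w : List (Option X) // IsSepWord X s k w})
    (r : R) :
    sepIns X R s x k (Finsupp.single w r) =
      if h : IsSepWord X s (k+1) (some x :: w.1)
      then Finsupp.single ⟨some x :: w.1, h⟩ r else 0 := by
  unfold sepIns
  rw [Finsupp.lift_apply, Finsupp.sum_single_index (by simp)]
  split
  · rw [Finsupp.smul_single, smul_eq_mul, mul_one]
  · simp

/- ### the homotopy identity, for words not containing x -/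

theorem homotopy_single (x : X) (k : ℕ) (w : {w : List (Option X) // IsSepWord X s (k+1) w})
    (hx : x ∉ w.1.filterMap id) :
    sepBnd X R s (k+1) (sepIns X R s x (k+1) (Finsupp.single w 1)) +
      sepIns X R s x k (sepBnd X R s k (Finsupp.single w 1)) = Finsupp.single w 1 := by
  have hxw : IsSepWord X s (k+1+1) (some x :: w.1) :=
    (isSepWord_cons_iff X s x w.1).mpr ⟨w.2, hx⟩
  have hwlen : w.1.length = s + k + 1 := by rw [w.2.2.2]; ring
  rw [sepIns_single, dif_pos hxw, sepBnd_single]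
  have hlen2 : (some x :: w.1).length = (s + k + 1) + 1 := by
    rw [List.length_cons, hwlen]
  simp only [hlen2]
  rw [Finset.sum_range_succ']
  have hzero : (if h : IsSepWord X s (k+1) ((some x :: w.1).eraseIdx 0)
      then Finsupp.single ⟨(some x :: w.1).eraseIdx 0, h⟩ ((-1 : R) ^ 0 * 1) else 0)
      = Finsupp.single w 1 := by
    rw [List.eraseIdx_cons_zero, dif_pos w.2]
    simp
  rw [hzero, sepBnd_single, hwlen, map_sum, add_assoc, add_comm (Finsupp.single w (1:R)), ← add_assoc,
    ← Finset.sum_add_distrib]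
  refine add_eq_right.mpr (Finset.sum_eq_zero fun i hi => ?_)
  rw [Finset.mem_range] at hi
  have hilt : i < w.1.length := by omega
  rw [List.eraseIdx_cons_succ]
  by_cases h : IsSepWord X s k (w.1.eraseIdx i)
  · have hx2 : x ∉ (w.1.eraseIdx i).filterMap id := fun hm =>
      hx ((filterMap_eraseIdx_sublist X w.1 i).mem hm)
    have hc : IsSepWord X s (k+1) (some x :: w.1.eraseIdx i) :=
      (isSepWord_cons_iff X s x _).mpr ⟨h, hx2⟩
    rw [dif_pos hc, dif_pos h, sepIns_single, dif_pos hc, ← Finsupp.single_add]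
    rw [Finsupp.single_eq_zero]
    rw [pow_succ]
    ring
  · have hc : ¬ IsSepWord X s (k+1) (some x :: w.1.eraseIdx i) := fun hc =>
      h ((isSepWord_cons_iff X s x _).mp hc).1
    rw [dif_neg hc, dif_neg h, map_zero, add_zero]

/- ### support lemmas -/

theorem supp_sepIns (x : X) (k : ℕ) (c : SepWords X R s k)
    {u : {w : List (Option X) // IsSepWord X s (k+1) w}}
    (hu : u ∈ (sepIns X R s x k c).support) :
    ∃ v ∈ c.support, u.1 = some x :: v.1 := by
  unfold sepIns at hu
  rw [Finsupp.lift_apply] at hu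
  have := Finsupp.support_sum hu
  rw [Finset.mem_biUnion] at this
  obtain ⟨v, hv, hu2⟩ := this
  refine ⟨v, hv, ?_⟩
  have hu3 := Finsupp.support_smul hu2
  split at hu3
  · have := Finsupp.support_single_subset hu3
    rw [Finset.mem_singleton] at this
    rw [this]
  · simp at hu3

theorem supp_sepBnd (k : ℕ) (c : SepWords X R s (k+1))
    {u : {w : List (Option X) // IsSepWord X s k w}}
    (hu : u ∈ (sepBnd X R s k c).support) :
    ∃ v ∈ c.support, ∃ i, i < v.1.length ∧ u.1 = v.1.eraseIdx i := by
  unfold sepBnd at hu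
  rw [Finsupp.lift_apply] at hu
  have := Finsupp.support_sum hu
  rw [Finset.mem_biUnion] at this
  obtain ⟨v, hv, hu2⟩ := this
  refine ⟨v, hv, ?_⟩
  have hu3 := Finsupp.support_smul hu2
  have hu4 := Finsupp.support_finset_sum hu3
  rw [Finset.mem_biUnion] at hu4
  obtain ⟨i, hi, hu5⟩ := hu4
  rw [Finset.mem_range] at hi
  refine ⟨i, hi, ?_⟩
  split at hu5
  · have := Finsupp.support_single_subset hu5
    rw [Finset.mem_singleton] at this
    rw [this]
  · simp at hu5

theorem mem_letters_eraseIdx (w : List (Option X)) (i : ℕ) (hi : i < w.length) (y : X)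
    (hy : y ∈ w.filterMap id) :
    y ∈ (w.eraseIdx i).filterMap id ∨ w[i] = some y := by
  have h0 : w = w.take i ++ w[i] :: w.drop (i+1) := by
    rw [List.getElem_cons_drop hi, List.take_append_drop]
  rw [List.eraseIdx_eq_take_drop_succ, List.filterMap_append, List.mem_append]
  conv at hy => rw [h0]
  rw [List.filterMap_append, List.mem_append] at hy
  rcases hy with h | h
  · exact Or.inl (Or.inl h)
  · cases hw : w[i] with
    | none =>
      rw [hw, List.filterMap_cons_none (by simp)] at h
      exact Or.inl (Or.inr h)
    | some z =>
      rw [hw, filterMap_cons_some' X z] at h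
      rcases List.mem_cons.mp h with h | h
      · exact Or.inr (by rw [h])
      · exact Or.inl (Or.inr h)

/- ### support of the homotopy defect -/

theorem supp_homotopy (x : X) (k : ℕ)
    (w : {w : List (Option X) // IsSepWord X s (k+1) w})
    (u : {w : List (Option X) // IsSepWord X s (k+1) w})
    (hu : u ∈ (Finsupp.single w (1:R)
      - sepBnd X R s (k+1) (sepIns X R s x (k+1) (Finsupp.single w 1))
      - sepIns X R s x k (sepBnd X R s k (Finsupp.single w 1))).support) :
    x ∈ u.1.filterMap id ∧ ∀ y ∈ w.1.filterMap id, y ∈ u.1.filterMap id := by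
  by_cases hx : x ∈ w.1.filterMap id
  · -- the insertion of x into w is zero; analyse supports
    have hz : sepIns X R s x (k+1) (Finsupp.single w (1:R)) = 0 := by
      rw [sepIns_single, dif_neg]
      intro hc
      exact ((isSepWord_cons_iff X s x w.1).mp hc).2 hx
    rw [hz, map_zero, sub_zero] at hu
    have := Finsupp.support_sub hu
    rw [Finset.mem_union] at this
    rcases this with h | h
    · have := Finsupp.support_single_subset h
      rw [Finset.mem_singleton] at this
      subst this
      exact ⟨hx, fun y hy => hy⟩
    · obtain ⟨v, hv, huv⟩ := supp_sepIns X R s x k _ h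
      obtain ⟨w', hw', i, hi, hvw⟩ := supp_sepBnd X R s k _ hv
      have hw'w : w' = w := by
        have := Finsupp.support_single_subset hw'
        rwa [Finset.mem_singleton] at this
      rw [hw'w] at hi hvw
      -- u.1 = some x :: (w.1.eraseIdx i), and x ∉ letters of v
      have hxv : x ∉ v.1.filterMap id := by
        have hu2 := u.2
        rw [huv, isSepWord_cons_iff X s x v.1] at hu2
        exact hu2.2
      have hxi : w.1[i] = some x := by
        rcases mem_letters_eraseIdx X w.1 i hi x hx with h | h
        · rw [← hvw] at h; exact absurd h hxv
        · exact h
      constructor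
      · rw [huv, filterMap_cons_some']
        exact List.mem_cons_self
      · intro y hy
        rw [huv, filterMap_cons_some']
        rcases mem_letters_eraseIdx X w.1 i hi y hy with h | h
        · rw [← hvw] at h
          exact List.mem_cons_of_mem x h
        · rw [hxi] at h
          rw [Option.some_inj] at h
          rw [← h]
          exact List.mem_cons_self
  · -- the homotopy identity: the defect is zero
    have h0 := homotopy_single X R s x k w hx
    have : (Finsupp.single w (1:R)
      - sepBnd X R s (k+1) (sepIns X R s x (k+1) (Finsupp.single w 1))
      - sepIns X R s x k (sepBnd X R s k (Finsupp.single w 1))) = 0 := by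
      rw [sub_sub, h0, sub_self]
    rw [this] at hu
    simp at hu

/- ### the reduction step -/

theorem reduce_step (x : X) (k : ℕ) (c : SepWords X R s (k+1))
    (hc : sepBnd X R s k c = 0) (l : List X)
    (hsupp : ∀ u ∈ c.support, ∀ y ∈ l, y ∈ u.1.filterMap id) :
    ∃ c' : SepWords X R s (k+1),
      sepBnd X R s k c' = 0 ∧ (∃ d, c - c' = sepBnd X R s (k+1) d) ∧
      ∀ u ∈ c'.support, ∀ y ∈ x :: l, y ∈ u.1.filterMap id := by
  set φ : SepWords X R s (k+1) →ₗ[R] SepWords X R s (k+1) :=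
    LinearMap.id - (sepBnd X R s (k+1)) ∘ₗ (sepIns X R s x (k+1))
      - (sepIns X R s x k) ∘ₗ (sepBnd X R s k) with hφ
  have happ : ∀ b : SepWords X R s (k+1), φ b
      = b - sepBnd X R s (k+1) (sepIns X R s x (k+1) b)
          - sepIns X R s x k (sepBnd X R s k b) := by
    intro b
    rw [hφ]
    simp only [LinearMap.sub_apply, LinearMap.id_apply, LinearMap.comp_apply]
  have h2 : sepBnd X R s k (sepBnd X R s (k+1) (sepIns X R s x (k+1) c)) = 0 := by
    have := LinearMap.congr_fun (bnd_bnd X R s k) (sepIns X R s x (k+1) c)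
    simpa using this
  refine ⟨φ c, ?_, ?_, ?_⟩
  · rw [happ, hc, map_zero, sub_zero, map_sub, hc, h2, sub_zero]
  · refine ⟨sepIns X R s x (k+1) c, ?_⟩
    rw [happ, hc, map_zero, sub_zero, sub_sub_cancel]
  · intro u hu y hy
    have hrep : φ c = c.sum (fun w r => φ (Finsupp.single w r)) := by
      conv_lhs => rw [← Finsupp.sum_single c]
      rw [map_finsuppSum]
    rw [hrep] at hu
    have := Finsupp.support_sum hu
    rw [Finset.mem_biUnion] at this
    obtain ⟨w, hw, hu2⟩ := this
    have hsm : φ (Finsupp.single w (c w)) = (c w) • φ (Finsupp.single w 1) := by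
      rw [← map_smul, Finsupp.smul_single, smul_eq_mul, mul_one]
    rw [hsm] at hu2
    have hu3 := Finsupp.support_smul hu2
    rw [happ] at hu3
    obtain ⟨hxu, hmono⟩ := supp_homotopy X R s x k w u hu3
    rcases List.mem_cons.mp hy with h | h
    · rw [h]; exact hxu
    · exact hmono y (hsupp w hw y h)

theorem reduce_list (k : ℕ) (l : List X) (c : SepWords X R s (k+1))
    (hc : sepBnd X R s k c = 0) :
    ∃ c', sepBnd X R s k c' = 0 ∧ (∃ d, c - c' = sepBnd X R s (k+1) d) ∧
      ∀ u ∈ c'.support, ∀ y ∈ l, y ∈ u.1.filterMap id := by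
  induction l with
  | nil => exact ⟨c, hc, ⟨0, by rw [map_zero, sub_self]⟩, by simp⟩
  | cons x l ih =>
    obtain ⟨c1, h1, ⟨d1, hd1⟩, hs1⟩ := ih
    obtain ⟨c2, h2, ⟨d2, hd2⟩, hs2⟩ := reduce_step X R s x k c1 h1 l hs1
    exact ⟨c2, h2, ⟨d1 + d2, by rw [map_add, ← hd1, ← hd2, sub_add_sub_cancel]⟩, hs2⟩

/- ### counting letters -/

theorem length_eq_count_add (l : List (Option X)) :
    l.length = l.count none + (l.filterMap id).length := by
  induction l with
  | nil => simp
  | cons a l ih =>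
    cases a <;> simp [ih, List.count_cons] <;> omega

theorem letters_length {k : ℕ} (u : {w : List (Option X) // IsSepWord X s k w}) :
    (u.1.filterMap id).length = k := by
  have h := length_eq_count_add X u.1
  rw [u.2.2.1, u.2.2.2] at h
  omega

/- ### surjectivity at the bottom -/

theorem bottom_surj (x : X) : Function.Surjective (sepBnd X R s 0) := by
  have hcomp : (sepBnd X R s 0) ∘ₗ (sepIns X R s x 0) = LinearMap.id := by
    apply Finsupp.lhom_ext
    intro w r
    have hlet : w.1.filterMap id = [] :=
      List.eq_nil_of_length_eq_zero (letters_length X s w)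
    have hxw : IsSepWord X s (0+1) (some x :: w.1) :=
      (isSepWord_cons_iff X s x w.1).mpr ⟨w.2, by rw [hlet]; simp⟩
    rw [LinearMap.comp_apply, sepIns_single, dif_pos hxw, sepBnd_single]
    have hwlen : w.1.length = s := by rw [w.2.2.2]; rfl
    have hlen2 : (some x :: w.1).length = s + 1 := by rw [List.length_cons, hwlen]
    simp only [hlen2]
    rw [Finset.sum_range_succ']
    have hzero : ∀ i ∈ Finset.range s,
        (if h : IsSepWord X s 0 ((some x :: w.1).eraseIdx (i+1))
         then Finsupp.single ⟨(some x :: w.1).eraseIdx (i+1), h⟩ ((-1 : R) ^ (i+1) * r)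
         else 0) = (0 : SepWords X R s 0) := by
      intro i hi
      rw [Finset.mem_range] at hi
      rw [List.eraseIdx_cons_succ, dif_neg]
      intro hcon
      have hcount : (some x :: w.1.eraseIdx i).count none = s := hcon.2.1
      rw [List.count_cons] at hcount
      simp only [beq_iff_eq, reduceCtorEq, if_false, add_zero] at hcount
      have hle : (w.1.eraseIdx i).count none ≤ (w.1.eraseIdx i).length :=
        List.count_le_length
      rw [List.length_eraseIdx_of_lt (by omega : i < w.1.length)] at hle
      omega
    rw [Finset.sum_eq_zero hzero, zero_add, List.eraseIdx_cons_zero, dif_pos w.2]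
    simp
  intro c
  refine ⟨sepIns X R s x 0 c, ?_⟩
  have := LinearMap.congr_fun hcomp c
  simpa using this

/-- The boundary operator of the complex of injective words with
`s` separators squares to zero, and the homology of the complex vanishes in all
degrees `i ≤ |X| - 2` (degree `i` corresponds to words with `i + 1` letters from
`X`; the condition at degree `-1` is surjectivity of the last boundary map). -/
theorem injective_words_with_separators_highly_acyclic :
    (∀ k, (sepBnd X R s k).comp (sepBnd X R s (k + 1)) = 0) ∧
    (1 ≤ Fintype.card X → Function.Surjective (sepBnd X R s 0)) ∧
    (∀ k, k + 2 ≤ Fintype.card X →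
      Function.Exact (sepBnd X R s (k + 1)) (sepBnd X R s k)) := by
  refine ⟨bnd_bnd X R s, ?_, ?_⟩
  · intro hcard
    obtain ⟨x⟩ := Fintype.card_pos_iff.mp hcard
    exact bottom_surj X R s x
  · intro k hk c
    constructor
    · intro hc
      obtain ⟨c', h1, ⟨d, hd⟩, hs⟩ :=
        reduce_list X R s k (Finset.univ : Finset X).toList c hc
      have hc0 : c' = 0 := by
        by_contra h
        obtain ⟨u, hu⟩ := Finsupp.support_nonempty_iff.mpr h
        have hall : ∀ y : X, y ∈ u.1.filterMap id := fun y =>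
          hs u hu y (by simp [Finset.mem_toList])
        have hfin : (u.1.filterMap id).toFinset = Finset.univ :=
          Finset.eq_univ_iff_forall.mpr (fun y => List.mem_toFinset.mpr (hall y))
        have hcard2 : Fintype.card X ≤ k + 1 := by
          have h1 := List.toFinset_card_le (u.1.filterMap id)
          rw [hfin, Finset.card_univ, letters_length X s u] at h1
          exact h1
        omega
      rw [hc0, sub_zero] at hd
      exact ⟨d, hd.symm⟩
    · rintro ⟨d, rfl⟩
      have := LinearMap.congr_fun (bnd_bnd X R s k) d
      simpa using this
end
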